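/- For n ≥ 6, the graph G_n minus the edge pq is a maximal planar graph (a triangulation): it is planar with n vertices and exactly 3n − 6 edges. -/

import Mathlib

open SimpleGraph

/-- `H` is a minor of `G`: there are nonempty, pairwise disjoint, connected branch
sets in `G`, one for each vertex of `H`, with an edge of `G` between the branch
sets of any two adjacent vertices of `H`. -/
def IsMinor {W V : Type*} (H : SimpleGraph W) (G : SimpleGraph V) : Prop :=
  ∃ f : W → Set V,
    (∀ w, (f w).Nonempty) ∧
    (∀ w, (G.induce (f w)).Connected) ∧
    (Pairwise fun w₁ w₂ => Disjoint (f w₁) (f w₂)) ∧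
    ∀ ⦃a b⦄, H.Adj a b → ∃ u ∈ f a, ∃ v ∈ f b, G.Adj u v

/-- Planarity, via Wagner's theorem: a graph is planar iff it has neither a `K₅`
minor nor a `K₃,₃` minor. -/
def IsPlanar {V : Type*} (G : SimpleGraph V) : Prop :=
  ¬ IsMinor (completeGraph (Fin 5)) G ∧
  ¬ IsMinor (completeBipartiteGraph (Fin 3) (Fin 3)) G

/-- The join of two graphs: their disjoint union plus all edges in between. -/
def Join {α β : Type*} (G : SimpleGraph α) (H : SimpleGraph β) :
    SimpleGraph (α ⊕ β) where
  Adj x y := match x, y with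
    | .inl a, .inl b => G.Adj a b
    | .inl _, .inr _ => True
    | .inr _, .inl _ => True
    | .inr a, .inr b => H.Adj a b
  symm := ⟨by rintro (a | a) (b | b) h <;> first | exact h.symm | trivial⟩
  loopless := ⟨by rintro (a | a) h <;> exact h.ne rfl⟩

/-- The graph `Gₙ`: a cycle on `n - 2` vertices, two poles `p = Sum.inr 0` and
`q = Sum.inr 1` adjacent to all cycle vertices, and the pole edge `pq`. -/
def Gn (n : ℕ) : SimpleGraph (Fin (n - 2) ⊕ Fin 2) :=
  Join (cycleGraph (n - 2)) (⊤ : SimpleGraph (Fin 2))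



variable {k : ℕ}

private def idx (t v : Fin (k + 2)) : ℕ := (v - t).val

private lemma idx_inj (t : Fin (k + 2)) {u v : Fin (k + 2)} (h : idx t u = idx t v) : u = v := by
  have h2 : u - t = v - t := Fin.val_injective h
  have := congrArg (· + t) h2
  simpa [sub_add_cancel] using this

private lemma idx_eq_zero (t v : Fin (k + 2)) : idx t v = 0 ↔ v = t := by
  unfold idx
  constructor
  · intro h
    have h2 : v - t = 0 := Fin.val_injective (by simpa using h)
    rw [sub_eq_zero] at h2
    exact h2
  · rintro rfl; simp

private lemma cg_adj {u v : Fin (k + 2)} :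
    (cycleGraph (k + 2)).Adj u v ↔ u = v + 1 ∨ v = u + 1 := by
  rw [cycleGraph_adj, sub_eq_iff_eq_add, sub_eq_iff_eq_add, add_comm (1 : Fin (k+2)) v,
    add_comm (1 : Fin (k+2)) u]

private lemma idx_succ {t u v : Fin (k + 2)} (h : v = u + 1) (hv : v ≠ t) :
    idx t v = idx t u + 1 := by
  subst h
  unfold idx
  have h2 : u + 1 - t = (u - t) + 1 := by abel
  rw [h2, Fin.val_add_one]
  split
  · next heq =>
    exfalso
    apply hv
    have : u - t + 1 = 0 := by rw [heq]; exact Fin.last_add_one _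
    have h3 : u + 1 - t = 0 := by rw [h2, this]
    have := congrArg (· + t) h3
    simpa [sub_add_cancel] using this
  · rfl

private lemma idx_step {t u v : Fin (k + 2)} (huv : (cycleGraph (k+2)).Adj u v)
    (hu : u ≠ t) (hv : v ≠ t) :
    idx t v = idx t u + 1 ∨ idx t u = idx t v + 1 := by
  rcases cg_adj.mp huv with h | h
  · exact Or.inr (idx_succ h hu)
  · exact Or.inl (idx_succ h hv)

private lemma walk_ivt {t : Fin (k + 2)} {x y : Fin (k + 2)}
    (W : (cycleGraph (k + 2)).Walk x y) (ht : ∀ z ∈ W.support, z ≠ t) :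
    ∀ c, idx t x ≤ c → c ≤ idx t y → ∃ z ∈ W.support, idx t z = c := by
  induction W with
  | nil =>
    intro c h1 h2
    exact ⟨_, Walk.start_mem_support _, by omega⟩
  | @cons a b y hab W ih =>
    intro c h1 h2
    rcases eq_or_lt_of_le h1 with h1 | h1
    · exact ⟨a, Walk.start_mem_support _, h1⟩
    · have hbt : b ≠ t := ht b (by simp)
      have hat : a ≠ t := ht a (by simp)
      have hb : idx t b ≤ c := by rcases idx_step hab hat hbt with h | h <;> omega
      obtain ⟨z, hz, hzc⟩ := ih (fun z hz => ht z (by simp [hz])) c hb h2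
      exact ⟨z, by simp [hz], hzc⟩

private lemma cycle_boundary {S : Set (Fin (k + 2))}
    (hc : ((cycleGraph (k + 2)).induce S).Connected) {t : Fin (k + 2)} (ht : t ∉ S) :
    ∃ x y : Fin (k + 2), ∀ v ∉ S, ∀ u ∈ S, (cycleGraph (k + 2)).Adj u v → v = x ∨ v = y := by
  classical
  obtain ⟨⟨a0, ha0⟩⟩ := hc.nonempty
  have hmemF : ∀ z, z ∈ (Set.toFinite S).toFinset ↔ z ∈ S := fun z => Set.Finite.mem_toFinset _
  set I : Finset ℕ := (Set.toFinite S).toFinset.image (idx t) with hI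
  have hIne : I.Nonempty := ⟨idx t a0, Finset.mem_image_of_mem _ ((hmemF a0).mpr ha0)⟩
  obtain ⟨a, haF, haidx⟩ := Finset.mem_image.mp (I.min'_mem hIne)
  obtain ⟨b, hbF, hbidx⟩ := Finset.mem_image.mp (I.max'_mem hIne)
  have haS : a ∈ S := (hmemF a).mp haF
  have hbS : b ∈ S := (hmemF b).mp hbF
  have hle : ∀ s ∈ S, idx t a ≤ idx t s ∧ idx t s ≤ idx t b := by
    intro s hs
    constructor
    · rw [haidx]; exact I.min'_le _ (Finset.mem_image_of_mem _ ((hmemF s).mpr hs))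
    · rw [hbidx]; exact I.le_max' _ (Finset.mem_image_of_mem _ ((hmemF s).mpr hs))
  have hpos : ∀ s ∈ S, 1 ≤ idx t s := by
    intro s hs
    rcases Nat.eq_zero_or_pos (idx t s) with h | h
    · exact absurd ((idx_eq_zero t s).mp h ▸ hs) ht
    · exact h
  -- interval property
  have hint : ∀ c, idx t a ≤ c → c ≤ idx t b → ∃ z ∈ S, idx t z = c := by
    intro c h1 h2
    obtain ⟨W'⟩ := hc.preconnected ⟨a, haS⟩ ⟨b, hbS⟩
    have hsupp : ∀ z ∈ (W'.map (SimpleGraph.Embedding.induce S).toHom).support, z ∈ S := by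
      intro z hz
      rw [Walk.support_map, List.mem_map] at hz
      obtain ⟨⟨s, hsS⟩, _, rfl⟩ := hz
      exact hsS
    obtain ⟨z, hz, hzc⟩ := walk_ivt (W'.map (SimpleGraph.Embedding.induce S).toHom)
      (fun z hz hzt => ht (by rw [← hzt]; exact hsupp z hz)) c h1 h2
    exact ⟨z, hsupp z hz, hzc⟩
  refine ⟨a - 1, b + 1, ?_⟩
  intro v hv u hu hadj
  have hut : u ≠ t := fun h => ht (h ▸ hu)
  rcases cg_adj.mp hadj with h | h
  · -- u = v + 1
    left
    by_cases hvt : v = t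
    · -- u = t + 1, idx u = 1
      have hidxu : idx t u = 1 := by
        unfold idx
        rw [h, hvt]
        have h2 : t + 1 - t = 1 := by abel
        rw [h2, Fin.val_one]
      have hua : u = a := by
        refine idx_inj t ?_
        have h1 := (hle u hu).1
        have h2 := hpos a haS
        omega
      rw [← hua]
      exact eq_sub_of_add_eq h.symm
    · have hstep : idx t u = idx t v + 1 := idx_succ h hut
      by_cases hgt : idx t a < idx t u
      · exfalso
        have h2 := (hle u hu).2
        obtain ⟨z, hzS, hzc⟩ := hint (idx t v) (by omega) (by omega)
        exact hv (idx_inj t hzc ▸ hzS)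
      · have hua : u = a := by
          refine idx_inj t ?_
          have h1 := (hle u hu).1
          omega
        rw [← hua]
        exact eq_sub_of_add_eq h.symm
  · -- v = u + 1
    right
    by_cases hvt : v = t
    · -- u = t - 1
      have hidxu : idx t u = k + 1 := by
        unfold idx
        have h3 : u = t - 1 := eq_sub_of_add_eq (hvt ▸ h.symm)
        rw [h3]
        have h2 : t - 1 - t = -1 := by abel
        rw [h2, Fin.coe_neg_one]
      have hub : u = b := by
        refine idx_inj t ?_
        have h1 := (hle u hu).2
        have h2 : idx t b < k + 2 := (b - t).isLt
        omega
      rw [hvt] at h ⊢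
      rw [hub] at h
      exact h
    · have hstep : idx t v = idx t u + 1 := idx_succ h hvt
      by_cases hlt : idx t u < idx t b
      · exfalso
        have h1 := (hle u hu).1
        obtain ⟨z, hzS, hzc⟩ := hint (idx t v) (by omega) (by omega)
        exact hv (idx_inj t hzc ▸ hzS)
      · have hub : u = b := by
          refine idx_inj t ?_
          have h1 := (hle u hu).2
          omega
        rw [← hub]
        exact h

private lemma three_nbrs {S : Set (Fin (k + 2))}
    (hc : ((cycleGraph (k + 2)).induce S).Connected) {v1 v2 v3 : Fin (k + 2)}
    (h12 : v1 ≠ v2) (h13 : v1 ≠ v3) (h23 : v2 ≠ v3)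
    (hv1 : v1 ∉ S) (hv2 : v2 ∉ S) (hv3 : v3 ∉ S)
    (ha1 : ∃ u ∈ S, (cycleGraph (k + 2)).Adj u v1)
    (ha2 : ∃ u ∈ S, (cycleGraph (k + 2)).Adj u v2)
    (ha3 : ∃ u ∈ S, (cycleGraph (k + 2)).Adj u v3) : False := by
  obtain ⟨x, y, hxy⟩ := cycle_boundary hc hv1
  obtain ⟨u1, hu1, hadj1⟩ := ha1
  obtain ⟨u2, hu2, hadj2⟩ := ha2
  obtain ⟨u3, hu3, hadj3⟩ := ha3
  have e1 := hxy v1 hv1 u1 hu1 hadj1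
  have e2 := hxy v2 hv2 u2 hu2 hadj2
  have e3 := hxy v3 hv3 u3 hu3 hadj3
  rcases e1 with rfl | rfl <;> rcases e2 with rfl | rfl <;> rcases e3 with rfl | rfl <;>
    simp_all

private lemma walk_closed {T : Set (Fin (k + 2))}
    (hcl : ∀ t ∈ T, ∀ x, (cycleGraph (k + 2)).Adj t x → x ∈ T) :
    ∀ {x y : Fin (k + 2)}, (cycleGraph (k + 2)).Walk x y → x ∈ T → y ∈ T := by
  intro x y W
  induction W with
  | nil => exact id
  | cons h p ih => exact fun hx => ih (hcl _ hx _ h)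

private lemma closed_eq_univ {T : Set (Fin (k + 2))} (hne : T.Nonempty)
    (hcl : ∀ t ∈ T, ∀ x, (cycleGraph (k + 2)).Adj t x → x ∈ T) : ∀ v, v ∈ T := by
  obtain ⟨t, ht⟩ := hne
  intro v
  obtain ⟨W⟩ := (cycleGraph_connected (n := k + 1)).preconnected t v
  exact walk_closed hcl W ht

private lemma nonempty_of_connected {S : Set (Fin (k + 2))}
    (hc : ((cycleGraph (k + 2)).induce S).Connected) : S.Nonempty := by
  obtain ⟨⟨s, hs⟩⟩ := hc.nonempty
  exact ⟨s, hs⟩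

private lemma cover3 {S1 S2 S3 : Set (Fin (k + 2))}
    (hc1 : ((cycleGraph (k + 2)).induce S1).Connected)
    (hc2 : ((cycleGraph (k + 2)).induce S2).Connected)
    (hc3 : ((cycleGraph (k + 2)).induce S3).Connected)
    (d12 : Disjoint S1 S2) (d13 : Disjoint S1 S3) (d23 : Disjoint S2 S3)
    (h12 : ∃ u ∈ S1, ∃ v ∈ S2, (cycleGraph (k + 2)).Adj u v)
    (h13 : ∃ u ∈ S1, ∃ v ∈ S3, (cycleGraph (k + 2)).Adj u v)
    (h23 : ∃ u ∈ S2, ∃ v ∈ S3, (cycleGraph (k + 2)).Adj u v) :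
    ∀ v, v ∈ S1 ∨ v ∈ S2 ∨ v ∈ S3 := by
  by_contra hcon
  push_neg at hcon
  obtain ⟨v0, hv01, hv02, hv03⟩ := hcon
  set T : Set (Fin (k + 2)) := {v | v ∉ S1 ∧ v ∉ S2 ∧ v ∉ S3} with hT
  have hcl : ∀ t ∈ T, ∀ x, (cycleGraph (k + 2)).Adj t x → x ∈ T := by
    rintro t ⟨ht1, ht2, ht3⟩ x hadj
    refine ⟨?_, ?_, ?_⟩
    · intro hx
      obtain ⟨u2, hu2, b2, hb2, hab2⟩ := h12
      obtain ⟨u3, hu3, b3, hb3, hab3⟩ := h13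
      exact three_nbrs hc1 (v1 := t) (v2 := b2) (v3 := b3)
        (fun h => ht2 (h ▸ hb2)) (fun h => ht3 (h ▸ hb3))
        (fun h => (Set.disjoint_left.mp d23 (h ▸ hb2)) hb3)
        ht1 (Set.disjoint_left.mp d12.symm hb2) (Set.disjoint_left.mp d13.symm hb3)
        ⟨x, hx, hadj.symm⟩ ⟨u2, hu2, hab2⟩ ⟨u3, hu3, hab3⟩
    · intro hx
      obtain ⟨u2, hu2, b2, hb2, hab2⟩ := h12
      obtain ⟨u3, hu3, b3, hb3, hab3⟩ := h23
      exact three_nbrs hc2 (v1 := t) (v2 := u2) (v3 := b3)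
        (fun h => ht1 (h ▸ hu2)) (fun h => ht3 (h ▸ hb3))
        (fun h => (Set.disjoint_left.mp d13 (h ▸ hu2)) hb3)
        ht2 (Set.disjoint_left.mp d12 hu2) (Set.disjoint_left.mp d23.symm hb3)
        ⟨x, hx, hadj.symm⟩ ⟨b2, hb2, hab2.symm⟩ ⟨u3, hu3, hab3⟩
    · intro hx
      obtain ⟨u2, hu2, b2, hb2, hab2⟩ := h13
      obtain ⟨u3, hu3, b3, hb3, hab3⟩ := h23
      exact three_nbrs hc3 (v1 := t) (v2 := u2) (v3 := u3)
        (fun h => ht1 (h ▸ hu2)) (fun h => ht2 (h ▸ hu3))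
        (fun h => (Set.disjoint_left.mp d12 (h ▸ hu2)) hu3)
        ht3 (Set.disjoint_left.mp d13 hu2) (Set.disjoint_left.mp d23 hu3)
        ⟨x, hx, hadj.symm⟩ ⟨b2, hb2, hab2.symm⟩ ⟨b3, hb3, hab3.symm⟩
  have hv0T : v0 ∈ T := ⟨hv01, hv02, hv03⟩
  have hall := closed_eq_univ ⟨v0, hv0T⟩ hcl
  obtain ⟨s, hs⟩ := nonempty_of_connected hc1
  exact (hall s).1 hs

private lemma cover4 {A1 A2 B1 B2 : Set (Fin (k + 2))}
    (hcA1 : ((cycleGraph (k + 2)).induce A1).Connected)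
    (hcA2 : ((cycleGraph (k + 2)).induce A2).Connected)
    (hcB1 : ((cycleGraph (k + 2)).induce B1).Connected)
    (hcB2 : ((cycleGraph (k + 2)).induce B2).Connected)
    (dA : Disjoint A1 A2) (dB : Disjoint B1 B2)
    (d11 : Disjoint A1 B1) (d12 : Disjoint A1 B2)
    (d21 : Disjoint A2 B1) (d22 : Disjoint A2 B2)
    (h11 : ∃ u ∈ A1, ∃ v ∈ B1, (cycleGraph (k + 2)).Adj u v)
    (h12 : ∃ u ∈ A1, ∃ v ∈ B2, (cycleGraph (k + 2)).Adj u v)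
    (h21 : ∃ u ∈ A2, ∃ v ∈ B1, (cycleGraph (k + 2)).Adj u v)
    (h22 : ∃ u ∈ A2, ∃ v ∈ B2, (cycleGraph (k + 2)).Adj u v) :
    ∀ v, v ∈ A1 ∨ v ∈ A2 ∨ v ∈ B1 ∨ v ∈ B2 := by
  by_contra hcon
  push_neg at hcon
  obtain ⟨v0, hv01, hv02, hv03, hv04⟩ := hcon
  set T : Set (Fin (k + 2)) := {v | v ∉ A1 ∧ v ∉ A2 ∧ v ∉ B1 ∧ v ∉ B2} with hT
  have hcl : ∀ t ∈ T, ∀ x, (cycleGraph (k + 2)).Adj t x → x ∈ T := by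
    rintro t ⟨ht1, ht2, ht3, ht4⟩ x hadj
    refine ⟨?_, ?_, ?_, ?_⟩
    · intro hx
      obtain ⟨u1, hu1, b1, hb1, hab1⟩ := h11
      obtain ⟨u2, hu2, b2, hb2, hab2⟩ := h12
      exact three_nbrs hcA1 (v1 := t) (v2 := b1) (v3 := b2)
        (fun h => ht3 (h ▸ hb1)) (fun h => ht4 (h ▸ hb2))
        (fun h => (Set.disjoint_left.mp dB (h ▸ hb1)) hb2)
        ht1 (Set.disjoint_left.mp d11.symm hb1) (Set.disjoint_left.mp d12.symm hb2)
        ⟨x, hx, hadj.symm⟩ ⟨u1, hu1, hab1⟩ ⟨u2, hu2, hab2⟩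
    · intro hx
      obtain ⟨u1, hu1, b1, hb1, hab1⟩ := h21
      obtain ⟨u2, hu2, b2, hb2, hab2⟩ := h22
      exact three_nbrs hcA2 (v1 := t) (v2 := b1) (v3 := b2)
        (fun h => ht3 (h ▸ hb1)) (fun h => ht4 (h ▸ hb2))
        (fun h => (Set.disjoint_left.mp dB (h ▸ hb1)) hb2)
        ht2 (Set.disjoint_left.mp d21.symm hb1) (Set.disjoint_left.mp d22.symm hb2)
        ⟨x, hx, hadj.symm⟩ ⟨u1, hu1, hab1⟩ ⟨u2, hu2, hab2⟩
    · intro hx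
      obtain ⟨u1, hu1, b1, hb1, hab1⟩ := h11
      obtain ⟨u2, hu2, b2, hb2, hab2⟩ := h21
      exact three_nbrs hcB1 (v1 := t) (v2 := u1) (v3 := u2)
        (fun h => ht1 (h ▸ hu1)) (fun h => ht2 (h ▸ hu2))
        (fun h => (Set.disjoint_left.mp dA (h ▸ hu1)) hu2)
        ht3 (Set.disjoint_left.mp d11 hu1) (Set.disjoint_left.mp d21 hu2)
        ⟨x, hx, hadj.symm⟩ ⟨b1, hb1, hab1.symm⟩ ⟨b2, hb2, hab2.symm⟩
    · intro hx
      obtain ⟨u1, hu1, b1, hb1, hab1⟩ := h12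
      obtain ⟨u2, hu2, b2, hb2, hab2⟩ := h22
      exact three_nbrs hcB2 (v1 := t) (v2 := u1) (v3 := u2)
        (fun h => ht1 (h ▸ hu1)) (fun h => ht2 (h ▸ hu2))
        (fun h => (Set.disjoint_left.mp dA (h ▸ hu1)) hu2)
        ht4 (Set.disjoint_left.mp d12 hu1) (Set.disjoint_left.mp d22 hu2)
        ⟨x, hx, hadj.symm⟩ ⟨b1, hb1, hab1.symm⟩ ⟨b2, hb2, hab2.symm⟩
  have hv0T : v0 ∈ T := ⟨hv01, hv02, hv03, hv04⟩
  have hall := closed_eq_univ ⟨v0, hv0T⟩ hcl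
  obtain ⟨s, hs⟩ := nonempty_of_connected hcA1
  exact (hall s).1 hs

private lemma fin2_cases : ∀ j : Fin 2, j = 0 ∨ j = 1 := by decide

section JoinLemmas

variable {k : ℕ}

private abbrev J (k : ℕ) : SimpleGraph (Fin (k + 2) ⊕ Fin 2) :=
  Join (cycleGraph (k + 2)) (⊥ : SimpleGraph (Fin 2))

private lemma J_adj_ll {i j : Fin (k + 2)} :
    (J k).Adj (Sum.inl i) (Sum.inl j) ↔ (cycleGraph (k + 2)).Adj i j := Iff.rfl

private lemma J_adj_lr {i : Fin (k + 2)} {j : Fin 2} :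
    (J k).Adj (Sum.inl i) (Sum.inr j) := trivial

private lemma J_adj_rr {i j : Fin 2} : ¬ (J k).Adj (Sum.inr i) (Sum.inr j) := fun h => h

private lemma free_conn {f : Set (Fin (k + 2) ⊕ Fin 2)} (hfree : ∀ j, Sum.inr j ∉ f)
    (hc : ((J k).induce f).Connected) :
    ((cycleGraph (k + 2)).induce {i | Sum.inl i ∈ f}).Connected := by
  let e : {i // i ∈ {i | Sum.inl i ∈ f}} ≃ {v // v ∈ f} :=
  { toFun := fun x => ⟨Sum.inl x.1, x.2⟩
    invFun := fun v => match v with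
      | ⟨Sum.inl i, h⟩ => ⟨i, h⟩
      | ⟨Sum.inr j, h⟩ => absurd h (hfree j)
    left_inv := fun x => rfl
    right_inv := fun v => by
      obtain ⟨v, h⟩ := v
      cases v with
      | inl i => rfl
      | inr j => exact absurd h (hfree j) }
  have iso : (cycleGraph (k + 2)).induce {i | Sum.inl i ∈ f} ≃g (J k).induce f :=
    ⟨e, fun {a b} => Iff.rfl⟩
  exact iso.connected_iff.mpr hc

-- no K5 minor
private lemma noK5 : ¬ IsMinor (completeGraph (Fin 5)) (J k) := by
  rintro ⟨f, hne, hconn, hdisj, hadj⟩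
  classical
  set B : Finset (Fin 5) :=
    Finset.univ.filter (fun w => Sum.inr 0 ∈ f w ∨ Sum.inr 1 ∈ f w) with hB
  have hpole : ∀ (p : Fin (k + 2) ⊕ Fin 2) (w w' : Fin 5), p ∈ f w → p ∈ f w' → w = w' := by
    intro p w w' hw hw'
    by_contra hne'
    exact Set.disjoint_left.mp (hdisj hne') hw hw'
  have hBcard : B.card ≤ 2 := by
    have := Finset.card_le_card_of_injOn
      (fun w => if Sum.inr 0 ∈ f w then (0 : Fin 2) else 1)
      (fun a _ => Finset.mem_univ _) (s := B) (t := Finset.univ) ?_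
    · simpa using this
    · intro w1 hw1 w2 hw2 heq
      simp only at heq
      by_cases h1 : Sum.inr 0 ∈ f w1 <;> by_cases h2 : Sum.inr 0 ∈ f w2 <;>
        simp [h1, h2] at heq
      · exact hpole _ _ _ h1 h2
      · have hw1' := (Finset.mem_filter.mp hw1).2
        have hw2' := (Finset.mem_filter.mp hw2).2
        rcases hw1' with h | h; · exact absurd h h1
        rcases hw2' with h' | h'; · exact absurd h' h2
        exact hpole _ _ _ h h'
  have hBc : 3 ≤ (Finset.univ \ B).card := by
    rw [Finset.card_sdiff_of_subset (Finset.subset_univ B)]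
    have : (Finset.univ : Finset (Fin 5)).card = 5 := by simp
    omega
  obtain ⟨t, hts, htc⟩ := Finset.exists_subset_card_eq hBc
  obtain ⟨w1, w2, w3, h12, h13, h23, rfl⟩ := Finset.card_eq_three.mp htc
  have hnotB : ∀ w ∈ ({w1, w2, w3} : Finset (Fin 5)), ∀ j : Fin 2, Sum.inr j ∉ f w := by
    intro w hw j hj
    have hw' := hts hw
    rw [Finset.mem_sdiff] at hw'
    apply hw'.2
    rw [hB, Finset.mem_filter]
    rcases fin2_cases j with rfl | rfl
    · exact ⟨Finset.mem_univ _, Or.inl hj⟩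
    · exact ⟨Finset.mem_univ _, Or.inr hj⟩
  have hmem1 : w1 ∈ ({w1, w2, w3} : Finset (Fin 5)) := by simp
  have hmem2 : w2 ∈ ({w1, w2, w3} : Finset (Fin 5)) := by simp
  have hmem3 : w3 ∈ ({w1, w2, w3} : Finset (Fin 5)) := by simp
  -- branch sets on the cycle
  set S : Fin 5 → Set (Fin (k + 2)) := fun w => {i | Sum.inl i ∈ f w} with hS
  have hSconn : ∀ w ∈ ({w1, w2, w3} : Finset (Fin 5)),
      ((cycleGraph (k + 2)).induce (S w)).Connected :=
    fun w hw => free_conn (hnotB w hw) (hconn w)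
  have hSdisj : ∀ w w' : Fin 5, w ≠ w' → Disjoint (S w) (S w') := by
    intro w w' hne'
    rw [Set.disjoint_left]
    intro i hi hi'
    exact Set.disjoint_left.mp (hdisj hne') hi hi'
  have hSadj : ∀ w w', w ∈ ({w1, w2, w3} : Finset (Fin 5)) →
      w' ∈ ({w1, w2, w3} : Finset (Fin 5)) → w ≠ w' →
      ∃ a ∈ S w, ∃ b ∈ S w', (cycleGraph (k + 2)).Adj a b := by
    intro w w' hw hw' hne'
    obtain ⟨u, hu, v, hv, huv⟩ := hadj (hne' : w ≠ w')
    cases u with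
    | inr j => exact absurd hu (hnotB w hw j)
    | inl a =>
      cases v with
      | inr j => exact absurd hv (hnotB w' hw' j)
      | inl b => exact ⟨a, hu, b, hv, J_adj_ll.mp huv⟩
  have hcov := cover3 (hSconn w1 hmem1) (hSconn w2 hmem2) (hSconn w3 hmem3)
    (hSdisj w1 w2 h12) (hSdisj w1 w3 h13) (hSdisj w2 w3 h23)
    (hSadj w1 w2 hmem1 hmem2 h12) (hSadj w1 w3 hmem1 hmem3 h13)
    (hSadj w2 w3 hmem2 hmem3 h23)
  obtain ⟨w4, w5, h45, h41, h42, h43, h51, h52, h53⟩ :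
      ∃ w4 w5 : Fin 5, w4 ≠ w5 ∧ w4 ≠ w1 ∧ w4 ≠ w2 ∧ w4 ≠ w3 ∧
        w5 ≠ w1 ∧ w5 ≠ w2 ∧ w5 ≠ w3 := by
    have hdec : ∀ x1 x2 x3 : Fin 5, ∃ w4 w5 : Fin 5, w4 ≠ w5 ∧ w4 ≠ x1 ∧ w4 ≠ x2 ∧ w4 ≠ x3 ∧
        w5 ≠ x1 ∧ w5 ≠ x2 ∧ w5 ≠ x3 := by decide
    exact hdec w1 w2 w3
  have hfreeL : ∀ w : Fin 5, w ≠ w1 → w ≠ w2 → w ≠ w3 → ∀ i : Fin (k + 2), Sum.inl i ∉ f w := by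
    intro w hn1 hn2 hn3 i hi
    rcases hcov i with h | h | h
    · exact Set.disjoint_left.mp (hdisj hn1) hi h
    · exact Set.disjoint_left.mp (hdisj hn2) hi h
    · exact Set.disjoint_left.mp (hdisj hn3) hi h
  obtain ⟨u, hu, v, hv, huv⟩ := hadj (h45 : w4 ≠ w5)
  cases u with
  | inl a => exact hfreeL w4 h41 h42 h43 a hu
  | inr j =>
    cases v with
    | inl b => exact hfreeL w5 h51 h52 h53 b hv
    | inr j' => exact J_adj_rr huv

-- no K33 minor
private lemma noK33 : ¬ IsMinor (completeBipartiteGraph (Fin 3) (Fin 3)) (J k) := by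
  rintro ⟨f, hne, hconn, hdisj, hadj⟩
  classical
  have hpole : ∀ (p : Fin (k + 2) ⊕ Fin 2) (w w' : Fin 3 ⊕ Fin 3),
      p ∈ f w → p ∈ f w' → w = w' := by
    intro p w w' hw hw'
    by_contra hne'
    exact Set.disjoint_left.mp (hdisj hne') hw hw'
  set polar : Fin 3 ⊕ Fin 3 → Prop := fun w => Sum.inr 0 ∈ f w ∨ Sum.inr 1 ∈ f w with hpolar
  have hthree : ∀ a b c : Fin 3 ⊕ Fin 3, a ≠ b → a ≠ c → b ≠ c →
      polar a → polar b → polar c → False := by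
    intro a b c hab hac hbc ha hb hc
    rcases ha with ha | ha <;> rcases hb with hb | hb <;> rcases hc with hc | hc
    · exact hab (hpole _ _ _ ha hb)
    · exact hab (hpole _ _ _ ha hb)
    · exact hac (hpole _ _ _ ha hc)
    · exact hbc (hpole _ _ _ hb hc)
    · exact hbc (hpole _ _ _ hb hc)
    · exact hac (hpole _ _ _ ha hc)
    · exact hab (hpole _ _ _ ha hb)
    · exact hab (hpole _ _ _ ha hb)
  have hfree : ∀ w, ¬ polar w → ∀ j : Fin 2, Sum.inr j ∉ f w := by
    intro w hw j hj
    rcases fin2_cases j with rfl | rfl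
    · exact hw (Or.inl hj)
    · exact hw (Or.inr hj)
  set S : Fin 3 ⊕ Fin 3 → Set (Fin (k + 2)) := fun w => {i | Sum.inl i ∈ f w} with hS
  have hSconn : ∀ w, ¬ polar w → ((cycleGraph (k + 2)).induce (S w)).Connected :=
    fun w hw => free_conn (hfree w hw) (hconn w)
  have hSdisj : ∀ w w' : Fin 3 ⊕ Fin 3, w ≠ w' → Disjoint (S w) (S w') := by
    intro w w' hne'
    rw [Set.disjoint_left]
    intro i hi hi'
    exact Set.disjoint_left.mp (hdisj hne') hi hi'
  have hSadj : ∀ (a b : Fin 3), ¬ polar (Sum.inl a) → ¬ polar (Sum.inr b) →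
      ∃ u ∈ S (Sum.inl a), ∃ v ∈ S (Sum.inr b), (cycleGraph (k + 2)).Adj u v := by
    intro a b hpa hpb
    obtain ⟨u, hu, v, hv, huv⟩ := hadj (a := Sum.inl a) (b := Sum.inr b) (by simp)
    cases u with
    | inr j => exact absurd hu (hfree _ hpa j)
    | inl i =>
      cases v with
      | inr j => exact absurd hv (hfree _ hpb j)
      | inl i' => exact ⟨i, hu, i', hv, J_adj_ll.mp huv⟩
  -- the 3+1 configuration is impossible
  have h31 : ∀ b : Fin 3, ¬ polar (Sum.inr b) → (∀ a : Fin 3, ¬ polar (Sum.inl a)) → False := by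
    intro b hpb hall
    obtain ⟨u1, hu1, v1, hv1, huv1⟩ := hSadj 0 b (hall 0) hpb
    obtain ⟨u2, hu2, v2, hv2, huv2⟩ := hSadj 1 b (hall 1) hpb
    obtain ⟨u3, hu3, v3, hv3, huv3⟩ := hSadj 2 b (hall 2) hpb
    have d1 : Disjoint (S (Sum.inr b)) (S (Sum.inl 0)) := hSdisj _ _ (by simp)
    have d2 : Disjoint (S (Sum.inr b)) (S (Sum.inl 1)) := hSdisj _ _ (by simp)
    have d3 : Disjoint (S (Sum.inr b)) (S (Sum.inl 2)) := hSdisj _ _ (by simp)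
    have d12 : Disjoint (S (Sum.inl 0)) (S (Sum.inl 1)) := hSdisj _ _ (by simp)
    have d13 : Disjoint (S (Sum.inl 0)) (S (Sum.inl 2)) := hSdisj _ _ (by simp)
    have d23 : Disjoint (S (Sum.inl 1)) (S (Sum.inl 2)) := hSdisj _ _ (by simp)
    exact three_nbrs (hSconn _ hpb) (v1 := u1) (v2 := u2) (v3 := u3)
      (fun h => Set.disjoint_left.mp d12 (h ▸ hu1) hu2)
      (fun h => Set.disjoint_left.mp d13 (h ▸ hu1) hu3)
      (fun h => Set.disjoint_left.mp d23 (h ▸ hu2) hu3)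
      (Set.disjoint_left.mp d1.symm hu1) (Set.disjoint_left.mp d2.symm hu2)
      (Set.disjoint_left.mp d3.symm hu3)
      ⟨v1, hv1, huv1.symm⟩ ⟨v2, hv2, huv2.symm⟩ ⟨v3, hv3, huv3.symm⟩
  have h13 : ∀ a : Fin 3, ¬ polar (Sum.inl a) → (∀ b : Fin 3, ¬ polar (Sum.inr b)) → False := by
    intro a hpa hall
    obtain ⟨u1, hu1, v1, hv1, huv1⟩ := hSadj a 0 hpa (hall 0)
    obtain ⟨u2, hu2, v2, hv2, huv2⟩ := hSadj a 1 hpa (hall 1)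
    obtain ⟨u3, hu3, v3, hv3, huv3⟩ := hSadj a 2 hpa (hall 2)
    have d1 : Disjoint (S (Sum.inl a)) (S (Sum.inr 0)) := hSdisj _ _ (by simp)
    have d2 : Disjoint (S (Sum.inl a)) (S (Sum.inr 1)) := hSdisj _ _ (by simp)
    have d3 : Disjoint (S (Sum.inl a)) (S (Sum.inr 2)) := hSdisj _ _ (by simp)
    have d12 : Disjoint (S (Sum.inr 0)) (S (Sum.inr 1)) := hSdisj _ _ (by simp)
    have d13 : Disjoint (S (Sum.inr 0)) (S (Sum.inr 2)) := hSdisj _ _ (by simp)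
    have d23 : Disjoint (S (Sum.inr 1)) (S (Sum.inr 2)) := hSdisj _ _ (by simp)
    exact three_nbrs (hSconn _ hpa) (v1 := v1) (v2 := v2) (v3 := v3)
      (fun h => Set.disjoint_left.mp d12 (h ▸ hv1) hv2)
      (fun h => Set.disjoint_left.mp d13 (h ▸ hv1) hv3)
      (fun h => Set.disjoint_left.mp d23 (h ▸ hv2) hv3)
      (Set.disjoint_left.mp d1.symm hv1) (Set.disjoint_left.mp d2.symm hv2)
      (Set.disjoint_left.mp d3.symm hv3)
      ⟨u1, hu1, huv1⟩ ⟨u2, hu2, huv2⟩ ⟨u3, hu3, huv3⟩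
  -- case analysis
  by_cases hL : ∀ a : Fin 3, ¬ polar (Sum.inl a)
  · -- right side has a non-polar element
    have : ∃ b : Fin 3, ¬ polar (Sum.inr b) := by
      by_contra hcon
      push_neg at hcon
      exact hthree (Sum.inr 0) (Sum.inr 1) (Sum.inr 2) (by simp) (by simp) (by simp)
        (hcon 0) (hcon 1) (hcon 2)
    obtain ⟨b, hb⟩ := this
    exact h31 b hb hL
  · push_neg at hL
    obtain ⟨a0, ha0⟩ := hL
    by_cases hR : ∀ b : Fin 3, ¬ polar (Sum.inr b)
    · have : ∃ a : Fin 3, ¬ polar (Sum.inl a) := by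
        by_contra hcon
        push_neg at hcon
        exact hthree (Sum.inl 0) (Sum.inl 1) (Sum.inl 2) (by simp) (by simp) (by simp)
          (hcon 0) (hcon 1) (hcon 2)
      obtain ⟨a, ha⟩ := this
      exact h13 a ha hR
    · push_neg at hR
      obtain ⟨b0, hb0⟩ := hR
      -- a0 is the only polar on the left, b0 the only polar on the right
      have honlyL : ∀ a : Fin 3, a ≠ a0 → ¬ polar (Sum.inl a) := by
        intro a ha hp
        exact hthree (Sum.inl a) (Sum.inl a0) (Sum.inr b0) (by simpa using ha)
          (by simp) (by simp) hp ha0 hb0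
      have honlyR : ∀ b : Fin 3, b ≠ b0 → ¬ polar (Sum.inr b) := by
        intro b hb hp
        exact hthree (Sum.inr b) (Sum.inr b0) (Sum.inl a0) (by simpa using hb)
          (by simp) (by simp) hp hb0 ha0
      obtain ⟨a1, a2, ha12, ha10, ha20⟩ :
          ∃ a1 a2 : Fin 3, a1 ≠ a2 ∧ a1 ≠ a0 ∧ a2 ≠ a0 := by
        have hdec : ∀ x : Fin 3, ∃ a1 a2 : Fin 3, a1 ≠ a2 ∧ a1 ≠ x ∧ a2 ≠ x := by decide
        exact hdec a0
      obtain ⟨b1, b2, hb12, hb10, hb20⟩ :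
          ∃ b1 b2 : Fin 3, b1 ≠ b2 ∧ b1 ≠ b0 ∧ b2 ≠ b0 := by
        have hdec : ∀ x : Fin 3, ∃ b1 b2 : Fin 3, b1 ≠ b2 ∧ b1 ≠ x ∧ b2 ≠ x := by decide
        exact hdec b0
      have hpa1 := honlyL a1 ha10
      have hpa2 := honlyL a2 ha20
      have hpb1 := honlyR b1 hb10
      have hpb2 := honlyR b2 hb20
      have hcov := cover4 (hSconn _ hpa1) (hSconn _ hpa2) (hSconn _ hpb1) (hSconn _ hpb2)
        (hSdisj _ _ (by simpa using ha12)) (hSdisj _ _ (by simpa using hb12))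
        (hSdisj _ _ (by simp)) (hSdisj _ _ (by simp))
        (hSdisj _ _ (by simp)) (hSdisj _ _ (by simp))
        (hSadj a1 b1 hpa1 hpb1) (hSadj a1 b2 hpa1 hpb2)
        (hSadj a2 b1 hpa2 hpb1) (hSadj a2 b2 hpa2 hpb2)
      have hfreeL : ∀ (w : Fin 3 ⊕ Fin 3), w ≠ Sum.inl a1 → w ≠ Sum.inl a2 →
          w ≠ Sum.inr b1 → w ≠ Sum.inr b2 → ∀ i : Fin (k + 2), Sum.inl i ∉ f w := by
        intro w hn1 hn2 hn3 hn4 i hi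
        rcases hcov i with h | h | h | h
        · exact Set.disjoint_left.mp (hSdisj _ _ hn1) hi h
        · exact Set.disjoint_left.mp (hSdisj _ _ hn2) hi h
        · exact Set.disjoint_left.mp (hSdisj _ _ hn3) hi h
        · exact Set.disjoint_left.mp (hSdisj _ _ hn4) hi h
      obtain ⟨u, hu, v, hv, huv⟩ := hadj (a := Sum.inl a0) (b := Sum.inr b0) (by simp)
      cases u with
      | inl i =>
        exact hfreeL (Sum.inl a0) (by simpa using ha10.symm) (by simpa using ha20.symm)
          (by simp) (by simp) i hu
      | inr j =>
        cases v with
        | inl i =>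
          exact hfreeL (Sum.inr b0) (by simp) (by simp) (by simpa using hb10.symm)
            (by simpa using hb20.symm) i hv
        | inr j' => exact J_adj_rr huv

end JoinLemmas


section EdgeCount

@[simp] private lemma Join_adj_ll {α β} {G : SimpleGraph α} {H : SimpleGraph β} {a b : α} :
    (Join G H).Adj (Sum.inl a) (Sum.inl b) ↔ G.Adj a b := Iff.rfl

@[simp] private lemma Join_adj_lr {α β} {G : SimpleGraph α} {H : SimpleGraph β} {a : α} {b : β} :
    (Join G H).Adj (Sum.inl a) (Sum.inr b) ↔ True := Iff.rfl

@[simp] private lemma Join_adj_rl {α β} {G : SimpleGraph α} {H : SimpleGraph β} {a : β} {b : α} :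
    (Join G H).Adj (Sum.inr a) (Sum.inl b) ↔ True := Iff.rfl

@[simp] private lemma Join_adj_rr {α β} {G : SimpleGraph α} {H : SimpleGraph β} {a b : β} :
    (Join G H).Adj (Sum.inr a) (Sum.inr b) ↔ H.Adj a b := Iff.rfl

private instance joinDecidable {α β} (G : SimpleGraph α) (H : SimpleGraph β)
    [DecidableRel G.Adj] [DecidableRel H.Adj] : DecidableRel (Join G H).Adj := fun x y =>
  match x, y with
  | .inl a, .inl b => (inferInstance : Decidable (G.Adj a b))
  | .inl _, .inr _ => .isTrue trivial
  | .inr _, .inl _ => .isTrue trivial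
  | .inr a, .inr b => (inferInstance : Decidable (H.Adj a b))

private lemma deg_inl (k : ℕ) (i : Fin (k + 3)) :
    (Join (cycleGraph (k + 3)) (⊥ : SimpleGraph (Fin 2))).degree (Sum.inl i) = 4 := by
  have hnbr : (Join (cycleGraph (k + 3)) (⊥ : SimpleGraph (Fin 2))).neighborFinset (Sum.inl i)
      = ((cycleGraph (k + 3)).neighborFinset i).map ⟨Sum.inl, Sum.inl_injective⟩ ∪
        (Finset.univ : Finset (Fin 2)).map ⟨Sum.inr, Sum.inr_injective⟩ := by
    ext y
    cases y <;> simp [mem_neighborFinset]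
  rw [degree, hnbr, Finset.card_union_of_disjoint, Finset.card_map, Finset.card_map]
  · have : ((cycleGraph (k + 3)).neighborFinset i).card = 2 := cycleGraph_degree_three_le
    rw [this]
    simp
  · simp [Finset.disjoint_left]

private lemma deg_inr (k : ℕ) (j : Fin 2) :
    (Join (cycleGraph (k + 3)) (⊥ : SimpleGraph (Fin 2))).degree (Sum.inr j) = k + 3 := by
  have hnbr : (Join (cycleGraph (k + 3)) (⊥ : SimpleGraph (Fin 2))).neighborFinset (Sum.inr j)
      = (Finset.univ : Finset (Fin (k + 3))).map ⟨Sum.inl, Sum.inl_injective⟩ := by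
    ext y
    cases y <;> simp [mem_neighborFinset]
  rw [degree, hnbr, Finset.card_map]
  simp

private lemma J_edge_card (k : ℕ) :
    (Join (cycleGraph (k + 3)) (⊥ : SimpleGraph (Fin 2))).edgeFinset.card = 3 * (k + 3) := by
  have h := SimpleGraph.sum_degrees_eq_twice_card_edges
    (Join (cycleGraph (k + 3)) (⊥ : SimpleGraph (Fin 2)))
  rw [Fintype.sum_sum_type] at h
  simp only [deg_inl, deg_inr, Finset.sum_const, Finset.card_univ, Fintype.card_fin,
    smul_eq_mul] at h
  omega

end EdgeCount

/-- For `n ≥ 6`, `Gₙ` minus the pole edge `pq` is a maximal planar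
graph (triangulation): it is planar, has `n` vertices and exactly `3n - 6` edges. -/
theorem Gn_minus_pq_triangulation (n : ℕ) (hn : 6 ≤ n) :
    IsPlanar ((Gn n).deleteEdges {s(Sum.inr 0, Sum.inr 1)}) ∧
    Fintype.card (Fin (n - 2) ⊕ Fin 2) = n ∧
    ((Gn n).deleteEdges {s(Sum.inr 0, Sum.inr 1)}).edgeSet.ncard = 3 * n - 6 := by
  have hk2 : n - 2 = (n - 4) + 2 := by omega
  have hk3 : n - 2 = (n - 5) + 3 := by omega
  have hGn : (Gn n).deleteEdges {s(Sum.inr 0, Sum.inr 1)}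
      = Join (cycleGraph (n - 2)) (⊥ : SimpleGraph (Fin 2)) := by
    ext x y
    cases x <;> cases y <;>
      simp only [Gn, deleteEdges_adj, Join_adj_ll, Join_adj_lr, Join_adj_rl, Join_adj_rr,
        top_adj, bot_adj, Set.mem_singleton_iff, iff_true, true_and, and_true, iff_false]
    · simp [Sym2.eq_iff]
    · simp [Sym2.eq_iff]
    · simp [Sym2.eq_iff]
    · rename_i i j
      rcases fin2_cases i with rfl | rfl <;> rcases fin2_cases j with rfl | rfl <;>
        simp [Sym2.eq_iff]
  refine ⟨⟨?_, ?_⟩, ?_, ?_⟩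
  · rw [hGn, hk2]
    exact noK5
  · rw [hGn, hk2]
    exact noK33
  · simp only [Fintype.card_sum, Fintype.card_fin]
    omega
  · rw [hGn, hk3, Set.ncard_eq_toFinset_card']
    have h := J_edge_card (n - 5)
    have h2 : (Join (cycleGraph (n - 5 + 3)) (⊥ : SimpleGraph (Fin 2))).edgeSet.toFinset.card
        = 3 * (n - 5 + 3) := h
    rw [h2]
    omega
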